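/- (Corollary 1) Let L be a finite-dimensional nilpotent left Leibniz algebra over a field k of characteristic 0 and let M be a subalgebra of L with M ≠ L. Then both the left normalizer N^l_L(M) and the right normalizer N^r_L(M) strictly contain M. -/
import Mathlib


/-
Basic notions for (left) Leibniz algebras, given by a bilinear bracket
`β : M →ₗ[k] M →ₗ[k] M` on a `k`-vector space `M`.
-/

section LeibnizDefs

variable {k : Type*} [Field k] {M : Type*} [AddCommGroup M] [Module k M]

/-- `[A, B]`: the linear span of brackets of elements of two subspaces. -/
def bracketSpan (β : M →ₗ[k] M →ₗ[k] M) (A B : Submodule k M) : Submodule k M :=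
  Submodule.span k {z : M | ∃ a ∈ A, ∃ b ∈ B, z = β a b}

/-- Derived series of a subspace `I`: `D^0 = I`, `D^{n+1} = [D^n, D^n]`. -/
def derivedSeriesOf (β : M →ₗ[k] M →ₗ[k] M) (I : Submodule k M) : ℕ → Submodule k M
  | 0 => I
  | n + 1 => bracketSpan β (derivedSeriesOf β I n) (derivedSeriesOf β I n)

/-- Lower central series of a subspace `I`: `C^0 = I`, `C^{n+1} = [I, C^n]`. -/
def lowerCentralSeriesOf (β : M →ₗ[k] M →ₗ[k] M) (I : Submodule k M) : ℕ → Submodule k M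
  | 0 => I
  | n + 1 => bracketSpan β I (lowerCentralSeriesOf β I n)

/-- A two-sided ideal. -/
def LeibnizIdeal (β : M →ₗ[k] M →ₗ[k] M) (I : Submodule k M) : Prop :=
  (∀ x : M, ∀ u ∈ I, β x u ∈ I) ∧ (∀ u ∈ I, ∀ x : M, β u x ∈ I)

/-- A subspace is solvable if its derived series reaches `0`. -/
def LeibnizSolvable (β : M →ₗ[k] M →ₗ[k] M) (I : Submodule k M) : Prop :=
  ∃ n, derivedSeriesOf β I n = ⊥

/-- A subspace is nilpotent if its lower central series reaches `0`. -/
def LeibnizNilpotent (β : M →ₗ[k] M →ₗ[k] M) (I : Submodule k M) : Prop :=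
  ∃ n, lowerCentralSeriesOf β I n = ⊥

/-- A subalgebra: a subspace closed under the bracket. -/
def LeibnizSubalgebra (β : M →ₗ[k] M →ₗ[k] M) (S : Submodule k M) : Prop :=
  ∀ u ∈ S, ∀ v ∈ S, β u v ∈ S

end LeibnizDefs


section Aux
variable {k : Type*} [Field k] {L : Type*} [AddCommGroup L] [Module k L]

lemma bracketSpan_mem' (β : L →ₗ[k] L →ₗ[k] L) {A B : Submodule k L} {a b : L}
    (ha : a ∈ A) (hb : b ∈ B) : β a b ∈ bracketSpan β A B :=
  Submodule.subset_span ⟨a, ha, b, hb, rfl⟩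

lemma bracketSpan_le' (β : L →ₗ[k] L →ₗ[k] L) {A B S : Submodule k L}
    (h : ∀ a ∈ A, ∀ b ∈ B, β a b ∈ S) : bracketSpan β A B ≤ S := by
  apply Submodule.span_le.2
  rintro z ⟨a, ha, b, hb, rfl⟩
  exact h a ha b hb

lemma lcs_key (β : L →ₗ[k] L →ₗ[k] L)
    (leib : ∀ x y z : L, β x (β y z) = β (β x y) z + β y (β x z)) :
    ∀ m n, bracketSpan β (lowerCentralSeriesOf β (⊤ : Submodule k L) m)
      (lowerCentralSeriesOf β (⊤ : Submodule k L) n)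
      ≤ lowerCentralSeriesOf β (⊤ : Submodule k L) (m + n + 1) := by
  intro m
  induction m with
  | zero =>
    intro n
    rw [Nat.zero_add]
    show bracketSpan β ⊤ _ ≤ lowerCentralSeriesOf β ⊤ (n + 1)
    exact le_of_eq rfl
  | succ m ih =>
    intro n
    apply bracketSpan_le'
    intro y hy z hz
    have hmono : lowerCentralSeriesOf β (⊤ : Submodule k L) (m + 1)
        ≤ (lowerCentralSeriesOf β (⊤ : Submodule k L) (m + 1 + n + 1)).comap (β.flip z) := by
      apply Submodule.span_le.2
      rintro w ⟨x, -, c, hc, rfl⟩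
      simp only [SetLike.mem_coe, Submodule.mem_comap, LinearMap.flip_apply]
      have h1 : β (β x c) z = β x (β c z) - β c (β x z) :=
        eq_sub_of_add_eq (leib x c z).symm
      rw [h1]
      apply sub_mem
      · have h2 : β c z ∈ lowerCentralSeriesOf β (⊤ : Submodule k L) (m + n + 1) :=
          ih n (bracketSpan_mem' β hc hz)
        have : β x (β c z) ∈ lowerCentralSeriesOf β (⊤ : Submodule k L) (m + n + 2) :=
          bracketSpan_mem' β Submodule.mem_top h2
        have e : m + n + 2 = m + 1 + n + 1 := by omega
        rwa [e] at this
      · have h3 : β x z ∈ lowerCentralSeriesOf β (⊤ : Submodule k L) (n + 1) :=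
          bracketSpan_mem' β Submodule.mem_top hz
        have := ih (n + 1) (bracketSpan_mem' β hc h3)
        have e : m + (n + 1) + 1 = m + 1 + n + 1 := by omega
        rwa [e] at this
    exact hmono hy

lemma lcs_antitone (β : L →ₗ[k] L →ₗ[k] L) :
    ∀ n, lowerCentralSeriesOf β (⊤ : Submodule k L) (n + 1)
      ≤ lowerCentralSeriesOf β (⊤ : Submodule k L) n := by
  intro n
  induction n with
  | zero => exact le_top
  | succ n ih =>
    show bracketSpan β ⊤ _ ≤ bracketSpan β ⊤ _
    apply bracketSpan_le'
    intro a ha b hb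
    exact bracketSpan_mem' β ha (ih hb)

end Aux

/-- In a nilpotent Leibniz algebra, both normalizers of a proper subalgebra
strictly contain it. -/
theorem stmt_8 {k : Type*} [Field k] [CharZero k] {L : Type*} [AddCommGroup L] [Module k L]
    [FiniteDimensional k L] (β : L →ₗ[k] L →ₗ[k] L)
    (leib : ∀ x y z : L, β x (β y z) = β (β x y) z + β y (β x z))
    (hnil : LeibnizNilpotent β (⊤ : Submodule k L))
    (M : Submodule k L) (hM : LeibnizSubalgebra β M) (hMne : M ≠ ⊤) :
    (M : Set L) ⊂ {a : L | ∀ u ∈ M, β a u ∈ M} ∧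
    (M : Set L) ⊂ {a : L | ∀ u ∈ M, β u a ∈ M} := by
  classical
  obtain ⟨N, hN⟩ := hnil
  have hex : ∃ n, lowerCentralSeriesOf β (⊤ : Submodule k L) n ≤ M := ⟨N, hN ▸ bot_le⟩
  set n₀ := Nat.find hex with hn₀
  have hspec : lowerCentralSeriesOf β (⊤ : Submodule k L) n₀ ≤ M := Nat.find_spec hex
  have hne : n₀ ≠ 0 := by
    intro h
    rw [h] at hspec
    exact hMne (top_le_iff.1 hspec)
  obtain ⟨m, hm⟩ := Nat.exists_eq_succ_of_ne_zero hne
  have hnotle : ¬ lowerCentralSeriesOf β (⊤ : Submodule k L) m ≤ M :=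
    Nat.find_min hex (by omega)
  obtain ⟨x, hxC, hxM⟩ := SetLike.not_le_iff_exists.1 hnotle
  rw [hm] at hspec
  have hxl : ∀ u ∈ M, β x u ∈ M := by
    intro u hu
    have h1 : β x u ∈ lowerCentralSeriesOf β (⊤ : Submodule k L) (m + 0 + 1) :=
      lcs_key β leib m 0 (bracketSpan_mem' β hxC Submodule.mem_top)
    exact hspec h1
  have hxr : ∀ u ∈ M, β u x ∈ M := by
    intro u hu
    exact hspec (bracketSpan_mem' β Submodule.mem_top hxC)
  constructor
  · refine (Set.ssubset_iff_of_subset ?_).2 ⟨x, hxl, hxM⟩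
    intro u hu
    exact fun v hv => hM u hu v hv
  · refine (Set.ssubset_iff_of_subset ?_).2 ⟨x, hxr, hxM⟩
    intro u hu
    exact fun v hv => hM v hv u hu
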